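/- For z = (z₁,z₂), w = (w₁,w₂) ∈ ℂ² with z₁w₂ − z₂w₁ ≠ 0, define φ₂(z,w) = ( |z₁w₁|² + (1/2)|z₁w₂ + w₁z₂|² + |z₂w₂|² ) / |z₁w₂ − z₂w₁|². Then φ₂(z,w) ≥ 1/2 for all such (z,w), and every real number r ≥ 1/2 is attained: for each r ≥ 1/2 there exist z, w ∈ ℂ² with z₁w₂ − z₂w₁ ≠ 0 and φ₂(z,w) = r. In particular the image of φ₂ is the interval [1/2, ∞). -/

import Mathlib

/-- The spherical function `φ₂` on `SL₂(ℂ)/T ≅ (ℙ¹ × ℙ¹) \ Δ`, in homogeneous coordinates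
`(z, w)` with `z₁w₂ − z₂w₁ ≠ 0`. -/
noncomputable def phi2 (z w : ℂ × ℂ) : ℝ :=
  (‖z.1 * w.1‖ ^ 2 + (1 / 2) * ‖z.1 * w.2 + w.1 * z.2‖ ^ 2 +
      ‖z.2 * w.2‖ ^ 2) / ‖z.1 * w.2 - z.2 * w.1‖ ^ 2

/-- `φ₂(z, w) ≥ 1/2` whenever `z₁w₂ − z₂w₁ ≠ 0`, and every `r ≥ 1/2` is attained;
i.e. the image of `φ₂` is `[1/2, ∞)`. -/
theorem stmt15 :
    (∀ z w : ℂ × ℂ, z.1 * w.2 - z.2 * w.1 ≠ 0 → 1 / 2 ≤ phi2 z w) ∧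
    (∀ r : ℝ, 1 / 2 ≤ r →
      ∃ z w : ℂ × ℂ, z.1 * w.2 - z.2 * w.1 ≠ 0 ∧ phi2 z w = r) := by
  constructor
  · intro z w hzw
    set a := ‖z.1 * w.2‖ with ha
    set b := ‖z.2 * w.1‖ with hb
    set c := ‖z.1 * w.1‖ with hc
    set d := ‖z.2 * w.2‖ with hd
    set S := ‖z.1 * w.2 + w.1 * z.2‖ with hS
    set D := ‖z.1 * w.2 - z.2 * w.1‖ with hD
    have hDpos : 0 < D := by
      simpa [hD] using (norm_pos_iff.mpr hzw)
    have hcd : c * d = a * b := by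
      rw [ha, hb, hc, hd, ← norm_mul, ← norm_mul]
      ring_nf
    have hStri : |a - b| ≤ S := by
      have := abs_norm_sub_norm_le (z.1 * w.2) (-(w.1 * z.2))
      simpa [ha, hb, hS, sub_neg_eq_add, mul_comm] using this
    have hDtri : D ≤ a + b := by
      have := norm_sub_le (z.1 * w.2) (z.2 * w.1)
      simpa [ha, hb, hD] using this
    have hS2 : (a - b) ^ 2 ≤ S ^ 2 := by
      have := sq_abs (a - b)
      nlinarith [abs_nonneg (a - b)]
    have hD2 : D ^ 2 ≤ (a + b) ^ 2 := by nlinarith [hDpos.le]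
    have geq : phi2 z w = (c ^ 2 + 1 / 2 * S ^ 2 + d ^ 2) / D ^ 2 := rfl
    rw [geq, le_div_iff₀ (by positivity)]
    nlinarith [sq_nonneg (c - d), sq_nonneg (a - b)]
  · intro r hr
    have h1 : (0:ℝ) ≤ 4 * r ^ 2 - 1 := by nlinarith
    set s : ℝ := 2 * r + Real.sqrt (4 * r ^ 2 - 1) with hs
    have hsq : Real.sqrt (4 * r ^ 2 - 1) ^ 2 = 4 * r ^ 2 - 1 := Real.sq_sqrt h1
    have hsqrtnn : 0 ≤ Real.sqrt (4 * r ^ 2 - 1) := Real.sqrt_nonneg _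
    have hspos : 0 < s := by nlinarith
    have hkey : 1 + s ^ 2 = 4 * r * s := by
      rw [hs]; nlinarith
    set t : ℝ := Real.sqrt s with ht
    have htpos : 0 < t := Real.sqrt_pos.mpr hspos
    have ht2 : t ^ 2 = s := Real.sq_sqrt hspos.le
    refine ⟨(1, (t:ℂ)), (1, -(t:ℂ)), ?_, ?_⟩
    · simp only
      intro h
      have : (2 * t : ℂ) = 0 := by linear_combination -h
      have h2 : (2:ℝ) * t = 0 := by exact_mod_cast this
      linarith
    · simp only [phi2]
      have habs : ∀ x : ℝ, ‖(x:ℂ)‖ = |x| := fun x => by simp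
      have e1 : ((1:ℂ) * 1) = 1 := by ring
      have e2 : ((1:ℂ) * -(t:ℂ) + 1 * (t:ℂ)) = 0 := by ring
      have e3 : ((t:ℂ) * -(t:ℂ)) = ((-(t^2) : ℝ) : ℂ) := by push_cast; ring
      have e4 : ((1:ℂ) * -(t:ℂ) - (t:ℂ) * 1) = ((-(2*t) : ℝ) : ℂ) := by push_cast; ring
      rw [e1, e2, e3, e4, norm_one, norm_zero, habs, habs]
      rw [abs_neg, abs_neg, sq_abs, sq_abs]
      have hden : ((2*t) ^ 2 : ℝ) ≠ 0 := by positivity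
      field_simp
      nlinarith [hkey, ht2]
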